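/- For the MRT precoder w_m = α·conj(h_m) with α = √(M/∑|h_{m'}|²) and PA output y_m = x_m + a₃x_m|x_m|² where x_m = w_m s, the received signal ∑_m h_m y_m equals s·α·∑_m |h_m|² + a₃·s|s|²·α³·∑_m |h_m|⁴. In the pure LOS case h_m = √β e^{−iφ_m}, this simplifies to √β·M·(s + a₃ s|s|²). -/

import Mathlib

theorem mrt_coherent_distortion (M : ℕ) (h : Fin M → ℂ) (s a3 : ℂ)
    (hpos : 0 < ∑ m, ‖h m‖ ^ 2)
    (α : ℝ) (hα : α = Real.sqrt ((M : ℝ) / ∑ m', ‖h m'‖ ^ 2))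
    (w x y : Fin M → ℂ)
    (hw : ∀ m, w m = (α : ℂ) * (starRingEnd ℂ) (h m))
    (hx : ∀ m, x m = w m * s)
    (hy : ∀ m, y m = x m + a3 * x m * ((‖x m‖ : ℂ)) ^ 2) :
    (∑ m, h m * y m
      = s * (α : ℂ) * (↑(∑ m, ‖h m‖ ^ 2) : ℂ)
        + a3 * s * ((‖s‖ : ℂ)) ^ 2 * (α : ℂ) ^ 3 *
            (↑(∑ m, ‖h m‖ ^ 4) : ℂ)) ∧
    (∀ β : ℝ, 0 < β → ∀ φ : Fin M → ℝ,
      (∀ m, h m = (Real.sqrt β : ℂ) * Complex.exp (-(Complex.I * φ m))) →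
      ∑ m, h m * y m
        = (Real.sqrt β : ℂ) * (M : ℂ) * (s + a3 * s * ((‖s‖ : ℂ)) ^ 2)) := by
  have e1 : ∀ z : ℂ, ((‖z‖ : ℂ)) ^ 2 = z * (starRingEnd ℂ) z := fun z => by
    rw [← Complex.ofReal_pow, Complex.sq_norm, Complex.mul_conj]
  have key : ∀ m, h m * y m
      = s * (α : ℂ) * ((‖h m‖ : ℂ)) ^ 2
        + a3 * s * ((‖s‖ : ℂ)) ^ 2 * (α : ℂ) ^ 3 * ((‖h m‖ : ℂ)) ^ 4 := by
    intro m
    have e2 : ((‖h m‖ : ℂ)) ^ 4 = (h m * (starRingEnd ℂ) (h m)) ^ 2 := by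
      rw [← e1]; ring
    rw [hy, hx, hw, e1, e1, e1, e2]
    simp only [map_mul, Complex.conj_conj, Complex.conj_ofReal]
    ring
  have hsum : ∑ m, h m * y m
      = s * (α : ℂ) * (↑(∑ m, ‖h m‖ ^ 2) : ℂ)
        + a3 * s * ((‖s‖ : ℂ)) ^ 2 * (α : ℂ) ^ 3 *
            (↑(∑ m, ‖h m‖ ^ 4) : ℂ) := by
    push_cast
    rw [Finset.mul_sum, Finset.mul_sum, ← Finset.sum_add_distrib]
    exact Finset.sum_congr rfl fun m _ => key m
  refine ⟨hsum, ?_⟩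
  intro β hβ φ hlos
  have habs : ∀ m, ‖h m‖ = Real.sqrt β := by
    intro m
    rw [hlos]
    simp [Complex.norm_exp, abs_of_nonneg (Real.sqrt_nonneg β)]
  have hsum2 : ∑ m, ‖h m‖ ^ 2 = (M : ℝ) * β := by
    simp [habs, Real.sq_sqrt hβ.le, Finset.sum_const, mul_comm]
  have hsum4 : ∑ m, ‖h m‖ ^ 4 = (M : ℝ) * β ^ 2 := by
    have : ∀ m : Fin M, ‖h m‖ ^ 4 = β ^ 2 := by
      intro m
      rw [habs]
      rw [show (4 : ℕ) = 2 * 2 from rfl, pow_mul, Real.sq_sqrt hβ.le]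
    simp [this, Finset.sum_const, mul_comm]
  have hMpos : (0 : ℝ) < M := by
    rw [hsum2] at hpos; nlinarith
  have hsb : Real.sqrt β * Real.sqrt β = β := Real.mul_self_sqrt hβ.le
  have hsbpos : 0 < Real.sqrt β := Real.sqrt_pos.mpr hβ
  have hαval : α = (Real.sqrt β)⁻¹ := by
    rw [hα, hsum2, show (M : ℝ) / ((M : ℝ) * β) = β⁻¹ by field_simp, Real.sqrt_inv]
  have r1 : α * ((M : ℝ) * β) = Real.sqrt β * M := by
    rw [hαval]; field_simp; nlinarith
  have r2 : α ^ 3 * ((M : ℝ) * β ^ 2) = Real.sqrt β * M := by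
    rw [hαval]; field_simp; linear_combination (-(β + Real.sqrt β ^ 2)) * hsb
  have r1c : (α : ℂ) * ((M : ℂ) * (β : ℂ)) = (Real.sqrt β : ℂ) * M := by
    exact_mod_cast congrArg Complex.ofReal r1
  have r2c : (α : ℂ) ^ 3 * ((M : ℂ) * (β : ℂ) ^ 2) = (Real.sqrt β : ℂ) * M := by
    exact_mod_cast congrArg Complex.ofReal r2
  rw [hsum, hsum2, hsum4]
  push_cast
  linear_combination s * r1c + a3 * s * ((‖s‖ : ℂ)) ^ 2 * r2c
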